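/- arXiv:1509.03429 — 3 statements merged into one kernel-verified Lean document; each statement's English description precedes it below -/
import Mathlib

section
/- Let u_1, ..., u_m be distinct real numbers and c_1, ..., c_m complex numbers. Then the sum of |c_j|^2 over j is at most the limsup as s tends to infinity of |sum_j c_j exp(i u_j s)|^2. -/
open Filter MeasureTheory intervalIntegral Complex

namespace OscAux

lemma pair_off (a : ℝ) (K : ℂ) (ha : a ≠ 0) :
    Tendsto (fun T : ℝ => (T : ℂ)⁻¹ * ∫ s in (0:ℝ)..T, K * Complex.exp (Complex.I * (a * s)))
      atTop (nhds 0) := by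
  have hIa : (Complex.I * a) ≠ 0 := by
    simp [Complex.I_ne_zero, Complex.ofReal_eq_zero, ha]
  have hint : ∀ T : ℝ, (∫ s in (0:ℝ)..T, K * Complex.exp (Complex.I * (a * s)))
      = K * ((Complex.exp (Complex.I * a * T) - 1) / (Complex.I * a)) := by
    intro T
    rw [intervalIntegral.integral_const_mul]
    have : ∀ s : ℝ, Complex.I * ((a : ℂ) * s) = (Complex.I * a) * s := fun s => by ring
    simp_rw [this]
    rw [integral_exp_mul_complex hIa]
    simp
  simp_rw [hint]
  refine squeeze_zero_norm' (a := fun T : ℝ => T⁻¹ * (‖K‖ * (2 / ‖Complex.I * (a:ℂ)‖))) ?_ ?_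
  · filter_upwards [eventually_ge_atTop (1:ℝ)] with T hT
    have hT0 : (0:ℝ) < T := by linarith
    rw [norm_mul, norm_mul, norm_div]
    have h1 : ‖((T:ℝ):ℂ)⁻¹‖ = T⁻¹ := by
      rw [norm_inv, Complex.norm_real, Real.norm_of_nonneg hT0.le]
    have h2 : ‖Complex.exp (Complex.I * a * T) - 1‖ ≤ 2 := by
      calc ‖Complex.exp (Complex.I * a * T) - 1‖ ≤ ‖Complex.exp (Complex.I * a * T)‖ + ‖(1:ℂ)‖ :=
        norm_sub_le _ _
      _ ≤ 2 := by
        have : ‖Complex.exp (Complex.I * a * T)‖ = 1 := by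
          rw [Complex.norm_exp]
          simp [Complex.mul_re]
        rw [this]; norm_num
    rw [h1]
    gcongr
  · rw [show (0:ℝ) = 0 * (‖K‖ * (2 / ‖Complex.I * (a:ℂ)‖)) by ring]
    exact (tendsto_inv_atTop_zero).mul_const _

lemma pair_diag (K : ℂ) :
    Tendsto (fun T : ℝ => (T : ℂ)⁻¹ * ∫ s in (0:ℝ)..T, K * Complex.exp (Complex.I * ((0:ℝ) * s)))
      atTop (nhds K) := by
  have : ∀ᶠ T : ℝ in atTop, (T : ℂ)⁻¹ * ∫ s in (0:ℝ)..T, K * Complex.exp (Complex.I * ((0:ℝ) * s)) = K := by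
    filter_upwards [eventually_ge_atTop (1:ℝ)] with T hT
    have hT0 : (T:ℂ) ≠ 0 := by
      simp only [ne_eq, Complex.ofReal_eq_zero]; intro h; rw [h] at hT; linarith
    simp only [Complex.ofReal_zero, zero_mul, mul_zero, Complex.exp_zero, mul_one]
    rw [intervalIntegral.integral_const]
    simp only [sub_zero, Complex.real_smul, Complex.ofReal_mul]
    field_simp
  exact Tendsto.congr' (this.mono fun T h => h.symm) tendsto_const_nhds

lemma pair (a : ℝ) (K : ℂ) :
    Tendsto (fun T : ℝ => (T : ℂ)⁻¹ * ∫ s in (0:ℝ)..T, K * Complex.exp (Complex.I * (a * s)))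
      atTop (nhds (if a = 0 then K else 0)) := by
  by_cases h : a = 0
  · subst h; simpa using pair_diag K
  · simp only [h, if_false]; exact pair_off a K h

lemma expand (m : ℕ) (u : Fin m → ℝ) (c : Fin m → ℂ) (s : ℝ) :
    ((‖∑ j, c j * Complex.exp (Complex.I * (u j * s))‖ ^ 2 : ℝ) : ℂ)
      = ∑ j, ∑ k, c j * (starRingEnd ℂ) (c k) * Complex.exp (Complex.I * ((u j - u k) * s)) := by
  rw [← Complex.normSq_eq_norm_sq, ← Complex.mul_conj]
  rw [map_sum, Finset.sum_mul_sum]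
  refine Finset.sum_congr rfl fun j _ => Finset.sum_congr rfl fun k _ => ?_
  have : (starRingEnd ℂ) (Complex.exp (Complex.I * (u k * s)))
      = Complex.exp (-(Complex.I * (u k * s))) := by
    rw [← Complex.exp_conj, map_mul, Complex.conj_I, map_mul, Complex.conj_ofReal,
      Complex.conj_ofReal, neg_mul]
  rw [map_mul, this, mul_mul_mul_comm, ← Complex.exp_add]
  congr 2
  ring

lemma avg_tendsto (m : ℕ) (u : Fin m → ℝ) (hu : Function.Injective u) (c : Fin m → ℂ) :
    Tendsto (fun T : ℝ => T⁻¹ * ∫ s in (0:ℝ)..T,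
        ‖∑ j, c j * Complex.exp (Complex.I * (u j * s))‖ ^ 2)
      atTop (nhds (∑ j, ‖c j‖ ^ 2)) := by
  set f : ℝ → ℝ := fun s => ‖∑ j, c j * Complex.exp (Complex.I * (u j * s))‖ ^ 2 with hf
  have hcont : ∀ (j k : Fin m), Continuous fun s : ℝ =>
      c j * (starRingEnd ℂ) (c k) * Complex.exp (Complex.I * ((u j - u k) * s)) := by
    intro j k
    fun_prop
  have hC : Tendsto (fun T : ℝ => (T : ℂ)⁻¹ * ∫ s in (0:ℝ)..T,
      ∑ j, ∑ k, c j * (starRingEnd ℂ) (c k) * Complex.exp (Complex.I * ((u j - u k) * s)))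
      atTop (nhds (∑ j, ∑ k : Fin m,
        if (u j - u k) = 0 then c j * (starRingEnd ℂ) (c k) else 0)) := by
    have heq : ∀ T : ℝ, (T : ℂ)⁻¹ * ∫ s in (0:ℝ)..T,
        ∑ j, ∑ k, c j * (starRingEnd ℂ) (c k) * Complex.exp (Complex.I * ((u j - u k) * s))
        = ∑ j, ∑ k : Fin m, (T : ℂ)⁻¹ *
            ∫ s in (0:ℝ)..T, c j * (starRingEnd ℂ) (c k) * Complex.exp (Complex.I * ((u j - u k) * s)) := by
      intro T
      rw [intervalIntegral.integral_finset_sum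
        (fun j _ => ((continuous_finset_sum _ fun k _ => hcont j k).intervalIntegrable 0 T)),
        Finset.mul_sum]
      refine Finset.sum_congr rfl fun j _ => ?_
      rw [intervalIntegral.integral_finset_sum (fun k _ => (hcont j k).intervalIntegrable 0 T),
        Finset.mul_sum]
    simp_rw [heq]
    refine tendsto_finset_sum _ fun j _ => tendsto_finset_sum _ fun k _ => ?_
    have := pair (u j - u k) (c j * (starRingEnd ℂ) (c k))
    push_cast at this
    exact this
  -- identify the limit
  have hlim : (∑ j, ∑ k : Fin m, if (u j - u k) = 0 then c j * (starRingEnd ℂ) (c k) else 0)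
      = ((∑ j, ‖c j‖ ^ 2 : ℝ) : ℂ) := by
    push_cast
    refine Finset.sum_congr rfl fun j _ => ?_
    rw [Finset.sum_eq_single j]
    · simp [Complex.mul_conj, Complex.normSq_eq_norm_sq]
    · intro k _ hk
      have : u j - u k ≠ 0 := sub_ne_zero.mpr (fun h => hk (hu h).symm)
      simp [this]
    · simp
  rw [hlim] at hC
  -- rewrite complex integrand as coercion of f
  have hC2 : Tendsto (fun T : ℝ => ((T⁻¹ * ∫ s in (0:ℝ)..T, f s : ℝ) : ℂ))
      atTop (nhds ((∑ j, ‖c j‖ ^ 2 : ℝ) : ℂ)) := by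
    refine hC.congr fun T => ?_
    have : (∫ s in (0:ℝ)..T,
        ∑ j, ∑ k, c j * (starRingEnd ℂ) (c k) * Complex.exp (Complex.I * ((u j - u k) * s)))
        = ∫ s in (0:ℝ)..T, ((f s : ℝ) : ℂ) := by
      refine intervalIntegral.integral_congr fun s _ => ?_
      exact (expand m u c s).symm
    rw [this, intervalIntegral.integral_ofReal]
    push_cast
    ring
  exact Filter.tendsto_ofReal_iff.mp hC2

end OscAux

/-- Oscillation lemma (Wallach): for distinct real frequencies `u j` and complex
coefficients `c j`, the sum of `|c j|²` is at most the limsup as `s → ∞` of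
`|Σ_j c_j e^{i u_j s}|²`. -/
theorem stmt0 (m : ℕ) (u : Fin m → ℝ) (hu : Function.Injective u) (c : Fin m → ℂ) :
    ∑ j, ‖c j‖ ^ 2 ≤
      Filter.limsup (fun s : ℝ =>
        ‖∑ j, c j * Complex.exp (Complex.I * (u j * s))‖ ^ 2) Filter.atTop := by
  set f : ℝ → ℝ := fun s => ‖∑ j, c j * Complex.exp (Complex.I * (u j * s))‖ ^ 2 with hf
  set S : ℝ := ∑ j, ‖c j‖ ^ 2 with hS
  set L : ℝ := Filter.limsup f Filter.atTop with hL
  have hfc : Continuous f := by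
    apply Continuous.pow
    apply continuous_norm.comp
    fun_prop
  have hfub : ∀ s : ℝ, f s ≤ (∑ j, ‖c j‖) ^ 2 := by
    intro s
    have h1 : ‖∑ j, c j * Complex.exp (Complex.I * (u j * s))‖
        ≤ ∑ j, ‖c j‖ := by
      refine le_trans (norm_sum_le _ _) (Finset.sum_le_sum fun j _ => ?_)
      rw [norm_mul]
      have : ‖Complex.exp (Complex.I * (u j * s))‖ = 1 := by
        rw [Complex.norm_exp]; simp [Complex.mul_re]
      rw [this, mul_one]
    exact pow_le_pow_left₀ (norm_nonneg _) h1 2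
  have hbdd : Filter.IsBoundedUnder (· ≤ ·) Filter.atTop f :=
    Filter.isBoundedUnder_of ⟨(∑ j, ‖c j‖) ^ 2, fun s => hfub s⟩
  refine le_of_forall_pos_le_add fun ε hε => ?_
  have hev : ∀ᶠ s in Filter.atTop, f s < L + ε :=
    Filter.eventually_lt_of_limsup_lt (by linarith) hbdd
  obtain ⟨s₁, hs₁⟩ := Filter.eventually_atTop.mp hev
  set s₀ : ℝ := max s₁ 1 with hs₀def
  have hs₀ : ∀ s ≥ s₀, f s < L + ε := fun s hs => hs₁ s (le_trans (le_max_left _ _) hs)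
  set C : ℝ := ∫ s in (0:ℝ)..s₀, f s with hC
  -- the average is eventually bounded by B T
  have hAB : ∀ᶠ T in Filter.atTop,
      T⁻¹ * ∫ s in (0:ℝ)..T, f s ≤ T⁻¹ * (C + (T - s₀) * (L + ε)) := by
    filter_upwards [Filter.eventually_ge_atTop s₀] with T hT
    have hT1 : (1:ℝ) ≤ s₀ := le_max_right _ _
    have hT0 : (0:ℝ) < T := by linarith
    have hsplit : (∫ s in (0:ℝ)..T, f s) = C + ∫ s in s₀..T, f s := by
      rw [hC, intervalIntegral.integral_add_adjacent_intervals
        (hfc.intervalIntegrable _ _) (hfc.intervalIntegrable _ _)]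
    have hmono : (∫ s in s₀..T, f s) ≤ (T - s₀) * (L + ε) := by
      have := intervalIntegral.integral_mono_on (μ := MeasureTheory.volume) (g := fun _ => L + ε) hT (hfc.intervalIntegrable _ _)
        (continuous_const.intervalIntegrable s₀ T) (fun s hs => (hs₀ s hs.1).le)
      rw [intervalIntegral.integral_const, smul_eq_mul] at this
      exact this
    rw [hsplit]
    have := mul_le_mul_of_nonneg_left (add_le_add_right hmono C) (inv_nonneg.mpr hT0.le)
    exact this
  -- B tends to L + ε
  have hBlim : Filter.Tendsto (fun T : ℝ => T⁻¹ * (C + (T - s₀) * (L + ε)))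
      Filter.atTop (nhds (L + ε)) := by
    have heq : ∀ᶠ T in Filter.atTop, T⁻¹ * (C + (T - s₀) * (L + ε))
        = T⁻¹ * C + (L + ε) - T⁻¹ * (s₀ * (L + ε)) := by
      filter_upwards [Filter.eventually_ge_atTop (1:ℝ)] with T hT
      have hT0 : T ≠ 0 := by positivity
      field_simp
      ring
    refine Filter.Tendsto.congr' (heq.mono fun T h => h.symm) ?_
    have t1 : Filter.Tendsto (fun T : ℝ => T⁻¹ * C) Filter.atTop (nhds 0) := by
      simpa using tendsto_inv_atTop_zero.mul_const C
    have t2 : Filter.Tendsto (fun T : ℝ => T⁻¹ * (s₀ * (L + ε))) Filter.atTop (nhds 0) := by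
      simpa using tendsto_inv_atTop_zero.mul_const (s₀ * (L + ε))
    have := (t1.add (tendsto_const_nhds (x := L + ε))).sub t2
    simpa using this
  exact le_of_tendsto_of_tendsto (OscAux.avg_tendsto m u hu c) hBlim hAB
end

section
/- Let u_1, ..., u_m be distinct real numbers and c_1, ..., c_m complex numbers, not all zero. Then there exist constants C > 0 and ε > 0 and a sequence t_1 < t_2 < ... tending to infinity such that |Σ_j c_j e^{i u_j t}| ≥ C for all t with |t - t_n| < ε for some n. -/
open Complex Filter Finset

private lemma exp_ne_exp (a v σ : ℝ) (hσ : 0 < σ) (hlt : |v - a| * σ < Real.pi) (hne : v ≠ a) :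
    Complex.exp (I * (v*σ)) ≠ Complex.exp (I * (a*σ)) := by
  intro h
  have h1 : Complex.exp (I * (v*σ) - I * (a*σ)) = 1 := by
    rw [Complex.exp_sub, h, div_self (Complex.exp_ne_zero _)]
  rw [Complex.exp_eq_one_iff] at h1
  obtain ⟨n, hn⟩ := h1
  have h2 : (((v - a) * σ : ℝ) : ℂ) * I = ((n * (2 * Real.pi) : ℝ) : ℂ) * I := by
    push_cast
    rw [show ((v:ℂ) - a) * σ * I = I * (v*σ) - I * (a*σ) by ring, hn]; ring
  have h3 : ((v - a) * σ : ℝ) = (n : ℝ) * (2 * Real.pi) := by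
    have := mul_right_cancel₀ Complex.I_ne_zero h2
    exact_mod_cast this
  have habs : |v - a| * σ = |(n:ℝ)| * (2 * Real.pi) := by
    have := congrArg (fun x : ℝ => |x|) h3
    simp only [abs_mul, abs_of_pos hσ, abs_of_pos (by positivity : (0:ℝ) < 2 * Real.pi)] at this
    exact this
  rcases eq_or_ne n 0 with hn0 | hn0
  · rw [hn0] at h3
    simp at h3
    rcases h3 with h3 | h3
    · exact hne (by linarith)
    · exact hσ.ne' h3
  · have : (1:ℝ) ≤ |(n:ℝ)| := by
      rw [← Int.cast_abs]; exact_mod_cast Int.one_le_abs hn0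
    nlinarith [Real.pi_pos]

private lemma all_zero (S : Finset ℝ) : ∀ c : ℝ → ℂ,
    Tendsto (fun t : ℝ => ∑ v ∈ S, c v * Complex.exp (I * (v * t))) atTop (nhds 0) →
    ∀ v ∈ S, c v = 0 := by
  induction S using Finset.induction_on with
  | empty => intro c _ v hv; simp at hv
  | @insert a s ha ih =>
    intro c hg
    set σ : ℝ := Real.pi / (1 + ∑ v ∈ s, |v - a|) with hσdef
    have hsum : (0:ℝ) ≤ ∑ v ∈ s, |v - a| := Finset.sum_nonneg fun _ _ => abs_nonneg _
    have hden : (0:ℝ) < 1 + ∑ v ∈ s, |v - a| := by linarith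
    have hσ : 0 < σ := div_pos Real.pi_pos hden
    have hlt : ∀ v ∈ s, |v - a| * σ < Real.pi := by
      intro v hv
      have h1 : |v - a| ≤ ∑ w ∈ s, |w - a| := Finset.single_le_sum (f := fun w => |w - a|) (fun _ _ => abs_nonneg _) hv
      have h2 : |v - a| * σ ≤ (∑ w ∈ s, |w - a|) * σ := mul_le_mul_of_nonneg_right h1 hσ.le
      have h3 : (∑ w ∈ s, |w - a|) * σ < (1 + ∑ w ∈ s, |w - a|) * σ := by nlinarith
      have h4 : (1 + ∑ w ∈ s, |w - a|) * σ = Real.pi := by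
        rw [hσdef]; field_simp
      linarith
    have heq : ∀ t:ℝ, (∑ v ∈ insert a s, c v * Complex.exp (I*(v*(t+σ)))) -
        Complex.exp (I*(a*σ)) * (∑ v ∈ insert a s, c v * Complex.exp (I*(v*t))) =
        ∑ v ∈ s, (c v * (Complex.exp (I*(v*σ)) - Complex.exp (I*(a*σ)))) * Complex.exp (I*(v*t)) := by
      intro t
      rw [Finset.mul_sum, ← Finset.sum_sub_distrib]
      have hterm : ∀ v : ℝ, c v * Complex.exp (I*(v*(t+σ))) -
          Complex.exp (I*(a*σ)) * (c v * Complex.exp (I*(v*t)))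
          = (c v * (Complex.exp (I*(v*σ)) - Complex.exp (I*(a*σ)))) * Complex.exp (I*(v*t)) := by
        intro v
        have he : Complex.exp (I*((v:ℂ)*((t:ℝ)+σ))) = Complex.exp (I*(v*t)) * Complex.exp (I*(v*σ)) := by
          rw [← Complex.exp_add]; congr 1; ring
        rw [he]; ring
      rw [Finset.sum_congr rfl (fun v _ => hterm v), Finset.sum_insert ha]
      simp
    have hshift : Tendsto (fun t : ℝ => ∑ v ∈ insert a s, c v * Complex.exp (I * (v * (t + σ))))
        atTop (nhds 0) := by
      have h0 : Tendsto (fun t : ℝ => t + σ) atTop atTop :=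
        tendsto_atTop_add_const_right atTop σ tendsto_id
      exact (hg.comp h0).congr fun t => by simp only [Function.comp_apply]; push_cast; rfl
    have hh : Tendsto (fun t : ℝ => ∑ v ∈ s,
        (c v * (Complex.exp (I*(v*σ)) - Complex.exp (I*(a*σ)))) * Complex.exp (I*(v*t)))
        atTop (nhds 0) := by
      have h2 := hshift.sub (hg.const_mul (Complex.exp (I*(a*σ))))
      simp only [mul_zero, sub_zero] at h2
      exact h2.congr heq
    have hzero := ih _ hh
    have hcs : ∀ v ∈ s, c v = 0 := by
      intro v hv
      have hne : v ≠ a := fun h => ha (h ▸ hv)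
      have := hzero v hv
      rcases mul_eq_zero.mp this with h | h
      · exact h
      · exact absurd (sub_eq_zero.mp h) (exp_ne_exp a v σ hσ (hlt v hv) hne)
    have hga : Tendsto (fun t : ℝ => c a * Complex.exp (I * (a*t))) atTop (nhds 0) := by
      refine hg.congr fun t => ?_
      rw [Finset.sum_insert ha, Finset.sum_eq_zero fun v hv => by rw [hcs v hv, zero_mul], add_zero]
    have habs : Tendsto (fun _ : ℝ => ‖c a‖) atTop (nhds 0) := by
      have h5 := (continuous_norm.tendsto 0).comp hga
      simp only [Function.comp_def, norm_mul, Complex.norm_exp, norm_zero] at h5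
      refine h5.congr fun t => ?_
      simp [Complex.mul_re]
    have : ‖c a‖ = 0 := tendsto_nhds_unique tendsto_const_nhds habs
    have hca : c a = 0 := by simpa using this
    intro v hv
    rcases Finset.mem_insert.mp hv with h | h
    · rw [h]; exact hca
    · exact hcs v h

private lemma stmt1aux (m : ℕ) (u : Fin m → ℝ) (c : Fin m → ℂ) :
    ∀ x y : ℝ, ‖(∑ j, c j * Complex.exp (I * (u j * y))) - ∑ j, c j * Complex.exp (I * (u j * x))‖
      ≤ (∑ j, ‖c j‖ * |u j|) * ‖y - x‖ := by
  intro x y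
  set M : ℝ := ∑ j, ‖c j‖ * |u j| with hM
  set g : ℝ → ℂ := fun t => ∑ j, c j * Complex.exp (I * (u j * t)) with hgdef
  set g' : ℝ → ℂ := fun t => ∑ j, c j * (Complex.exp (I * (u j * t)) * (I * u j)) with hg'def
  have hderiv : ∀ t : ℝ, HasDerivAt g (g' t) t := by
    intro t
    apply HasDerivAt.fun_sum
    intro j _
    have d1 : HasDerivAt (fun t : ℝ => I * ((u j : ℂ) * (t : ℂ))) (I * (u j : ℂ)) t := by
      have d0 := (Complex.ofRealCLM.hasDerivAt (x := t)).const_mul (I * (u j : ℂ))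
      simpa [mul_assoc] using d0
    exact (d1.cexp).const_mul (c j)
  have hbound : ∀ t : ℝ, ‖g' t‖ ≤ M := by
    intro t
    calc ‖g' t‖ ≤ ∑ j, ‖c j * (Complex.exp (I * (u j * t)) * (I * (u j:ℂ)))‖ :=
          norm_sum_le _ _
      _ = M := by
          rw [hM]
          refine Finset.sum_congr rfl fun j _ => ?_
          rw [norm_mul, norm_mul, norm_mul]
          simp [Complex.norm_exp, Complex.mul_re]
  have := Convex.norm_image_sub_le_of_norm_hasDerivWithin_le
    (f := g) (f' := g') (fun z _ => (hderiv z).hasDerivWithinAt)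
    (fun z _ => hbound z) convex_univ (Set.mem_univ x) (Set.mem_univ y)
  simpa using this

/-- For distinct real frequencies `u j` and complex coefficients `c j`, not all zero,
there exist `C > 0`, `ε > 0` and a strictly increasing sequence `t n → ∞` such that
`|Σ_j c_j e^{i u_j t}| ≥ C` whenever `|t - t n| < ε` for some `n`. -/
theorem stmt1 (m : ℕ) (u : Fin m → ℝ) (hu : Function.Injective u) (c : Fin m → ℂ)
    (hc : ∃ j, c j ≠ 0) :
    ∃ C > (0:ℝ), ∃ ε > (0:ℝ), ∃ t : ℕ → ℝ, StrictMono t ∧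
      Filter.Tendsto t Filter.atTop Filter.atTop ∧
      ∀ n : ℕ, ∀ s : ℝ, |s - t n| < ε →
        C ≤ ‖∑ j, c j * Complex.exp (Complex.I * (u j * s))‖ := by
  classical
  set g : ℝ → ℂ := fun t => ∑ j, c j * Complex.exp (I * (u j * t)) with hgdef
  set M : ℝ := ∑ j, ‖c j‖ * |u j| with hMdef
  have hM0 : 0 ≤ M := Finset.sum_nonneg fun j _ =>
    mul_nonneg (norm_nonneg _) (abs_nonneg _)
  have hden : (0:ℝ) < 2 * (M + 1) := by linarith
  have hlip : ∀ x y : ℝ, ‖g y - g x‖ ≤ M * ‖y - x‖ := fun x y => stmt1aux m u c x y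
  have hnot : ¬ Tendsto g atTop (nhds 0) := by
    intro h
    set c' : ℝ → ℂ := Function.extend u c 0 with hc'def
    have hrw : ∀ t : ℝ, (∑ v ∈ Finset.univ.image u, c' v * Complex.exp (I * (v * t))) = g t := by
      intro t
      rw [Finset.sum_image (fun x _ y _ h => hu h)]
      exact Finset.sum_congr rfl fun j _ => by rw [hc'def, hu.extend_apply c 0 j]
    have h2 : Tendsto (fun t : ℝ => ∑ v ∈ Finset.univ.image u, c' v * Complex.exp (I * (v * t)))
        atTop (nhds 0) := h.congr fun t => (hrw t).symm
    have h3 := all_zero _ _ h2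
    obtain ⟨j, hj⟩ := hc
    apply hj
    have h4 := h3 (u j) (Finset.mem_image_of_mem u (Finset.mem_univ j))
    rw [hc'def] at h4
    rwa [hu.extend_apply c 0 j] at h4
  have hδ : ∃ δ > (0:ℝ), ∀ N : ℝ, ∃ x ≥ N, δ ≤ ‖g x‖ := by
    by_contra hcon
    push_neg at hcon
    apply hnot
    rw [Metric.tendsto_atTop]
    intro ε hε
    obtain ⟨N, hN⟩ := hcon ε hε
    exact ⟨N, fun x hx => by rw [dist_zero_right]; exact hN x hx⟩
  obtain ⟨δ, hδ0, H⟩ := hδ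
  choose f hf1 hf2 using H
  set t : ℕ → ℝ := fun n => Nat.rec (f 0) (fun _ prev => f (prev + 1)) n with htdef
  have htsucc : ∀ n : ℕ, t n + 1 ≤ t (n + 1) := fun n => hf1 (t n + 1)
  have hmono : StrictMono t := strictMono_nat_of_lt_succ fun n => by
    have := htsucc n; linarith
  have habs : ∀ n : ℕ, δ ≤ ‖g (t n)‖ := by
    intro n
    cases n with
    | zero => exact hf2 0
    | succ k => exact hf2 (t k + 1)
  have hlb : ∀ n : ℕ, t 0 + n ≤ t n := by
    intro n
    induction n with
    | zero => simp
    | succ k ih =>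
      have := htsucc k
      push_cast
      linarith
  have htend : Tendsto t atTop atTop := by
    apply tendsto_atTop_mono hlb
    exact tendsto_atTop_add_const_left _ _ tendsto_natCast_atTop_atTop
  refine ⟨δ / 2, by linarith, δ / (2 * (M + 1)), div_pos hδ0 hden, t, hmono, htend, ?_⟩
  intro n s hs
  have h1 : ‖g (t n) - g s‖ ≤ M * ‖t n - s‖ := hlip s (t n)
  have h2 : ‖t n - s‖ = |s - t n| := by rw [Real.norm_eq_abs, abs_sub_comm]
  have h3 : ‖g (t n)‖ - ‖g s‖ ≤ ‖g (t n) - g s‖ := by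
    simpa using norm_sub_norm_le (g (t n)) (g s)
  have h4 : M * |s - t n| ≤ M * (δ / (2 * (M + 1))) :=
    mul_le_mul_of_nonneg_left hs.le hM0
  have h5 : M * (δ / (2 * (M + 1))) ≤ δ / 2 := by
    rw [mul_div_assoc', div_le_div_iff₀ hden (by norm_num : (0:ℝ) < 2)]
    nlinarith [hδ0, hM0]
  have h6 := habs n
  show δ / 2 ≤ ‖g s‖
  have := h3
  rw [h2] at h1
  linarith [h1, h4, h5, h6, h3]
end

section
/- Let Ξ be a finite subset of ℂ, q_ξ complex polynomials, f(t) = Σ_{ξ∈Ξ} e^{ξ t} q_ξ(t), λ = max{Re ξ : q_ξ ≠ 0} and d the maximal degree of q_ξ among ξ with Re ξ = λ. Then there exist C > 0, ε > 0 and a sequence t_1 < t_2 < ... tending to infinity such that |f(t)| ≥ C e^{λ t} t^d for all t ∈ (t_n − ε, t_n + ε) and all n. -/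
open Filter Topology Polynomial Complex
set_option maxHeartbeats 1000000

lemma aux_poly_div_pow (p : Polynomial ℂ) (d : ℕ) (h : p.natDegree ≤ d) :
    Tendsto (fun t : ℝ => p.eval (t:ℂ) / (t:ℂ)^d) atTop (𝓝 (p.coeff d)) := by
  have key : ∀ k ∈ Finset.range (d+1),
      Tendsto (fun t : ℝ => p.coeff k * (t:ℂ)^k / (t:ℂ)^d) atTop
        (𝓝 (if k = d then p.coeff d else 0)) := by
    intro k hk
    rcases eq_or_ne k d with rfl | hkd
    · rw [if_pos rfl]
      refine Tendsto.congr' ?_ ((tendsto_const_nhds : Tendsto (fun _ : ℝ => p.coeff k) atTop _))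
      filter_upwards [eventually_gt_atTop (0:ℝ)] with t ht
      have h0 : (t:ℂ) ≠ 0 := by exact_mod_cast ht.ne'
      field_simp
    · simp only [if_neg hkd]
      have hk' : k < d := lt_of_le_of_ne (Nat.lt_succ_iff.mp (Finset.mem_range.mp hk)) hkd
      refine squeeze_zero_norm' ?_ ((tendsto_const_nhds : Tendsto (fun _ : ℝ => ‖p.coeff k‖) atTop _).div_atTop tendsto_id)
      filter_upwards [eventually_ge_atTop (1:ℝ)] with t ht
      have ht0 : (0:ℝ) < t := lt_of_lt_of_le one_pos ht
      have h1 : ‖p.coeff k * (t:ℂ)^k / (t:ℂ)^d‖ = ‖p.coeff k‖ * t^k / t^d := by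
        rw [norm_div, norm_mul, norm_pow, norm_pow]
        simp [Complex.norm_real, abs_of_pos ht0]
      rw [h1, show id t = t from rfl, div_le_div_iff₀ (by positivity) ht0]
      calc ‖p.coeff k‖ * t^k * t = ‖p.coeff k‖ * t^(k+1) := by ring
        _ ≤ ‖p.coeff k‖ * t^d := mul_le_mul_of_nonneg_left (pow_le_pow_right₀ ht hk') (norm_nonneg _)
  have hs := tendsto_finset_sum _ key
  rw [Finset.sum_ite_eq' (Finset.range (d+1)) d] at hs
  simp only [Finset.mem_range, Nat.lt_succ_iff, le_refl, if_pos] at hs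
  refine Tendsto.congr' ?_ hs
  filter_upwards [eventually_gt_atTop (0:ℝ)] with t ht
  rw [eval_eq_sum_range' (Nat.lt_succ_of_le h), Finset.sum_div]

lemma aux_exp_poly (p : Polynomial ℂ) (δ : ℝ) (hδ : 0 < δ) :
    Tendsto (fun t : ℝ => Real.exp (-(δ * t)) * ‖p.eval (t:ℂ)‖) atTop (𝓝 0) := by
  have term : ∀ k : ℕ, Tendsto (fun t : ℝ => ‖p.coeff k‖ * (t^k * Real.exp (-(δ * t))))
      atTop (𝓝 0) := by
    intro k
    have h1 : Tendsto (fun t : ℝ => (δ*t)^k * Real.exp (-(δ*t))) atTop (𝓝 0) :=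
      (Real.tendsto_pow_mul_exp_neg_atTop_nhds_zero k).comp
        (tendsto_id.const_mul_atTop hδ)
    have h2 := (h1.const_mul ((1/δ)^k)).const_mul ‖p.coeff k‖
    simp only [mul_zero] at h2
    refine h2.congr fun t => ?_
    rw [mul_pow]
    field_simp
    rw [mul_assoc ‖p.coeff k‖, ← mul_pow, one_div_mul_cancel hδ.ne', one_pow, mul_one]
  have hs := tendsto_finset_sum (Finset.range (p.natDegree + 1)) (fun k _ => term k)
  rw [Finset.sum_const_zero] at hs
  refine squeeze_zero_norm' ?_ hs
  filter_upwards [eventually_ge_atTop (0:ℝ)] with t ht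
  have hb : ‖p.eval (t:ℂ)‖ ≤ ∑ k ∈ Finset.range (p.natDegree + 1), ‖p.coeff k‖ * t^k := by
    rw [eval_eq_sum_range]
    refine (norm_sum_le _ _).trans ?_
    refine Finset.sum_le_sum fun k _ => ?_
    rw [norm_mul, norm_pow, Complex.norm_real, Real.norm_eq_abs, _root_.abs_of_nonneg ht]
  rw [Real.norm_eq_abs, _root_.abs_of_nonneg (by positivity)]
  calc Real.exp (-(δ * t)) * ‖p.eval (t:ℂ)‖
      ≤ Real.exp (-(δ * t)) * ∑ k ∈ Finset.range (p.natDegree + 1), ‖p.coeff k‖ * t^k := by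
        gcongr
    _ = ∑ k ∈ Finset.range (p.natDegree + 1), ‖p.coeff k‖ * (t^k * Real.exp (-(δ * t))) := by
        rw [Finset.mul_sum]; refine Finset.sum_congr rfl fun k _ => by ring

noncomputable def expChar (u : ℝ) : Multiplicative ℝ →* ℂ where
  toFun t := Complex.exp (Complex.I * u * (Multiplicative.toAdd t : ℝ))
  map_one' := by simp
  map_mul' x y := by
    simp only [toAdd_mul, Complex.ofReal_add, mul_add, Complex.exp_add]

lemma expChar_injective : Function.Injective expChar := by
  intro u v huv
  by_contra hne
  have huv' : (u:ℂ) - v ≠ 0 := by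
    simpa [sub_eq_zero] using fun h => hne (Complex.ofReal_injective h)
  set t : ℝ := Real.pi / (u - v) with ht
  have h1 : expChar u (Multiplicative.ofAdd t) = expChar v (Multiplicative.ofAdd t) := by
    rw [huv]
  have h2 : (Complex.I * u * t : ℂ) = Complex.I * v * t + Real.pi * Complex.I := by
    have hsub : (u:ℝ) - v ≠ 0 := sub_ne_zero.mpr fun h => hne h
    rw [ht]
    push_cast
    field_simp
    ring
  simp only [expChar, MonoidHom.coe_mk, OneHom.coe_mk, toAdd_ofAdd] at h1
  rw [h2, Complex.exp_add, Complex.exp_pi_mul_I, mul_neg_one] at h1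
  have h3 : (2:ℂ) * Complex.exp (Complex.I * v * t) = 0 := by linear_combination -h1
  rcases mul_eq_zero.mp h3 with h4 | h4
  · norm_num at h4
  · exact Complex.exp_ne_zero _ h4

lemma trig_nonzero (S : Finset ℂ) (c : ℂ → ℂ)
    (hinj : Set.InjOn (fun ξ : ℂ => ξ.im) S)
    (ξ₀ : ℂ) (hξ₀ : ξ₀ ∈ S) (hc : c ξ₀ ≠ 0) :
    ∃ t : ℝ, ∑ ξ ∈ S, c ξ * Complex.exp (Complex.I * ξ.im * t) ≠ 0 := by
  by_contra hall
  push_neg at hall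
  have hinj2 : Function.Injective (fun ξ : ↥S => expChar (ξ.1.im)) := by
    intro a b hab
    exact Subtype.ext (hinj a.2 b.2 (expChar_injective hab))
  have li := (linearIndependent_monoidHom (Multiplicative ℝ) ℂ).comp
      (fun ξ : ↥S => expChar (ξ.1.im)) hinj2
  have hzero : ∑ ξ : ↥S, c ξ.1 • ((expChar (ξ.1.im) : Multiplicative ℝ →* ℂ) :
      Multiplicative ℝ → ℂ) = 0 := by
    funext x
    simp only [Finset.sum_apply, Pi.smul_apply, smul_eq_mul, Pi.zero_apply]
    have := hall (Multiplicative.toAdd x)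
    rw [← Finset.sum_coe_sort S
      (fun ξ => c ξ * Complex.exp (Complex.I * ξ.im * (Multiplicative.toAdd x : ℝ)))] at this
    simpa [expChar] using this
  have := Fintype.linearIndependent_iff.mp li (fun ξ => c ξ.1) hzero ⟨ξ₀, hξ₀⟩
  exact hc this

lemma norm_exp_I_mul (u t : ℝ) : ‖Complex.exp (Complex.I * u * t)‖ = 1 := by
  rw [Complex.norm_exp]
  simp [Complex.mul_re, Complex.mul_im]

lemma recurrence (S : Finset ℂ) (δ : ℝ) (hδ : 0 < δ) :
    ∃ᶠ n : ℕ in atTop, ∀ ξ ∈ S, ‖Complex.exp (Complex.I * ξ.im * (n:ℝ)) - 1‖ < δ := by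
  set x : ℕ → (↥S → ℂ) := fun n ξ => Complex.exp (Complex.I * (ξ.1.im) * (n:ℝ)) with hx
  have hmem : ∀ n, x n ∈ Metric.closedBall (0 : ↥S → ℂ) 1 := by
    intro n
    rw [Metric.mem_closedBall, dist_zero_right]
    refine (pi_norm_le_iff_of_nonneg zero_le_one).mpr fun ξ => ?_
    rw [hx]; exact le_of_eq (norm_exp_I_mul _ _)
  obtain ⟨a, -, φ, hφ, hconv⟩ :=
    (isCompact_closedBall (0 : ↥S → ℂ) 1).tendsto_subseq hmem
  rw [Filter.frequently_atTop]
  intro N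
  rw [Metric.tendsto_atTop] at hconv
  obtain ⟨K, hK⟩ := hconv (δ/2) (half_pos hδ)
  have hdiff : ∀ m : ℕ, φ K + m ≤ φ (K + m) := by
    intro m
    induction m with
    | zero => simp
    | succ m ih =>
      have := hφ (show K + m < K + (m+1) by omega)
      omega
  set l := K + (N + 1) with hl
  have hle : φ K + N + 1 ≤ φ l := by have h := hdiff (N+1); rw [← hl] at h; omega
  have hKl : φ K ≤ φ l := by omega
  refine ⟨φ l - φ K, by omega, fun ξ hξ => ?_⟩
  have key : x (φ l) ⟨ξ, hξ⟩ - x (φ K) ⟨ξ, hξ⟩ =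
      Complex.exp (Complex.I * ξ.im * ((φ K : ℕ) : ℝ)) *
        (Complex.exp (Complex.I * ξ.im * ((φ l - φ K : ℕ) : ℝ)) - 1) := by
    simp only [hx]
    rw [mul_sub, mul_one, ← Complex.exp_add]
    congr 2
    push_cast [Nat.cast_sub hKl]
    ring
  have hnorm : ‖Complex.exp (Complex.I * ξ.im * ((φ l - φ K : ℕ) : ℝ)) - 1‖ =
      ‖x (φ l) ⟨ξ, hξ⟩ - x (φ K) ⟨ξ, hξ⟩‖ := by
    rw [key, norm_mul, norm_exp_I_mul, one_mul]
  rw [hnorm]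
  calc ‖x (φ l) ⟨ξ, hξ⟩ - x (φ K) ⟨ξ, hξ⟩‖ ≤ dist (x (φ l)) (x (φ K)) := by
        rw [← dist_eq_norm]
        exact dist_le_pi_dist (x (φ l)) (x (φ K)) ⟨ξ, hξ⟩
    _ ≤ dist (x (φ l)) a + dist (x (φ K)) a := dist_triangle_right _ _ _
    _ < δ/2 + δ/2 := add_lt_add (hK l (by omega)) (hK K le_rfl)
    _ = δ := add_halves δ


/-- Lower bound for an exponential polynomial `f(t) = Σ_{ξ ∈ Ξ} e^{ξ t} q_ξ(t)`:
with `λ = max {Re ξ : q_ξ ≠ 0}` and `d` the maximal degree of `q_ξ` among `ξ` with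
`Re ξ = λ`, there exist `C > 0`, `ε > 0` and a strictly increasing sequence `t_n → ∞`
with `|f(t)| ≥ C e^{λ t} t^d` for all `t ∈ (t_n − ε, t_n + ε)` and all `n`. -/
theorem stmt11 (Ξ : Finset ℂ) (q : ℂ → Polynomial ℂ) (lam : ℝ) (d : ℕ)
    (hlam₁ : ∃ ξ ∈ Ξ, q ξ ≠ 0 ∧ ξ.re = lam)
    (hlam₂ : ∀ ξ ∈ Ξ, q ξ ≠ 0 → ξ.re ≤ lam)
    (hd₁ : ∃ ξ ∈ Ξ, q ξ ≠ 0 ∧ ξ.re = lam ∧ (q ξ).natDegree = d)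
    (hd₂ : ∀ ξ ∈ Ξ, q ξ ≠ 0 → ξ.re = lam → (q ξ).natDegree ≤ d) :
    ∃ C > (0:ℝ), ∃ ε > (0:ℝ), ∃ tseq : ℕ → ℝ, StrictMono tseq ∧
      Filter.Tendsto tseq Filter.atTop Filter.atTop ∧
      ∀ n : ℕ, ∀ t : ℝ, |t - tseq n| < ε →
        C * Real.exp (lam * t) * t ^ d ≤
          ‖∑ ξ ∈ Ξ, Complex.exp (ξ * t) * (q ξ).eval (t : ℂ)‖ := by

  classical
  obtain ⟨ξ₁, hξ₁Ξ, hq₁, hre₁, hdeg₁⟩ := hd₁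
  obtain ⟨P, hP⟩ : ∃ P : ℂ → Prop, P = fun ξ => q ξ ≠ 0 ∧ ξ.re = lam ∧ (q ξ).natDegree = d := ⟨_, rfl⟩
  obtain ⟨S, hS⟩ : ∃ S : Finset ℂ, S = Ξ.filter P := ⟨_, rfl⟩
  obtain ⟨c, hc⟩ : ∃ c : ℂ → ℂ, c = fun ξ => (q ξ).coeff d := ⟨_, rfl⟩
  obtain ⟨h, hh⟩ : ∃ h : ℝ → ℂ, h = fun t : ℝ => ∑ ξ ∈ S, c ξ * Complex.exp (Complex.I * ξ.im * t) := ⟨_, rfl⟩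
  obtain ⟨F, hF⟩ : ∃ F : ℝ → ℂ, F = fun t : ℝ => ∑ ξ ∈ Ξ, Complex.exp (ξ * t) * (q ξ).eval (t:ℂ) := ⟨_, rfl⟩
  obtain ⟨D, hD⟩ : ∃ D : ℝ → ℂ, D = fun t : ℝ => F t / (Complex.exp ((lam:ℂ) * t) * (t:ℂ)^d) := ⟨_, rfl⟩
  -- Step A: termwise limits
  have hterm : ∀ ξ ∈ Ξ, Tendsto (fun t : ℝ =>
      Complex.exp ((ξ - (lam:ℂ)) * t) * (q ξ).eval (t:ℂ) / (t:ℂ)^d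
        - (if P ξ then c ξ * Complex.exp (Complex.I * ξ.im * t) else 0)) atTop (𝓝 0) := by
    intro ξ hξ
    by_cases hq : q ξ = 0
    · have hPf : ¬ P ξ := by simp only [hP]; exact fun hp => hp.1 hq
      refine tendsto_const_nhds.congr fun t => ?_
      simp [hq, hPf]
    by_cases hre : ξ.re = lam
    · have hcoeff : (if P ξ then c ξ else 0) = (q ξ).coeff d := by
        by_cases hdeg : (q ξ).natDegree = d
        · have hPt : P ξ := by simp only [hP]; exact ⟨hq, hre, hdeg⟩
          rw [if_pos hPt, hc]
        · have hPf : ¬ P ξ := by simp only [hP]; exact fun hp => hdeg hp.2.2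
          have hlt : (q ξ).natDegree < d := lt_of_le_of_ne (hd₂ ξ hξ hq hre) hdeg
          simp [hPf, Polynomial.coeff_eq_zero_of_natDegree_lt hlt]
      have hid : ξ - (lam:ℂ) = Complex.I * ξ.im := by
        apply Complex.ext <;> simp [hre]
      have h1 := aux_poly_div_pow (q ξ) d (hd₂ ξ hξ hq hre)
      have h2 : Tendsto (fun t : ℝ => (q ξ).eval (t:ℂ)/(t:ℂ)^d - (q ξ).coeff d)
          atTop (𝓝 0) := by
        have := h1.sub_const ((q ξ).coeff d)
        rwa [sub_self] at this
      rw [tendsto_zero_iff_norm_tendsto_zero] at h2 ⊢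
      refine h2.congr fun t => ?_
      have heq : Complex.exp ((ξ - (lam:ℂ)) * t) * (q ξ).eval (t:ℂ) / (t:ℂ)^d
          - (if P ξ then c ξ * Complex.exp (Complex.I * ξ.im * t) else 0)
          = Complex.exp (Complex.I * ξ.im * t)
              * ((q ξ).eval (t:ℂ)/(t:ℂ)^d - (q ξ).coeff d) := by
        rw [hid]
        by_cases hPξ : P ξ
        · rw [if_pos hPξ]
          have : c ξ = (q ξ).coeff d := by rw [← hcoeff, if_pos hPξ]
          rw [this]; ring
        · rw [if_neg hPξ]
          have : (q ξ).coeff d = 0 := by rw [← hcoeff, if_neg hPξ]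
          rw [this]; ring
      rw [heq, norm_mul, norm_exp_I_mul, one_mul]
    · have hlt : ξ.re < lam := lt_of_le_of_ne (hlam₂ ξ hξ hq) hre
      have hPf : ¬ P ξ := by simp only [hP]; exact fun hp => hre hp.2.1
      simp only [if_neg hPf, sub_zero]
      refine squeeze_zero_norm' ?_ (aux_exp_poly (q ξ) (lam - ξ.re) (by linarith))
      filter_upwards [eventually_ge_atTop (1:ℝ)] with t ht
      have ht0 : (0:ℝ) < t := lt_of_lt_of_le one_pos ht
      have hnorm : ‖Complex.exp ((ξ - (lam:ℂ)) * t) * (q ξ).eval (t:ℂ) / (t:ℂ)^d‖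
          = Real.exp ((ξ.re - lam) * t) * ‖(q ξ).eval (t:ℂ)‖ / t^d := by
        rw [norm_div, norm_mul, norm_pow, Complex.norm_exp]
        congr 2
        · congr 1
          simp [Complex.mul_re]
        · rw [Complex.norm_real, Real.norm_eq_abs, _root_.abs_of_pos ht0]
      rw [hnorm]
      have htd : (1:ℝ) ≤ t^d := one_le_pow₀ ht
      have hexp : Real.exp ((ξ.re - lam)*t) = Real.exp (-((lam - ξ.re)*t)) := by
        congr 1; ring
      rw [hexp]
      exact div_le_self (by positivity) htd
  have hsum := tendsto_finset_sum Ξ hterm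
  rw [Finset.sum_const_zero] at hsum
  have hDh : Tendsto (fun t => D t - h t) atTop (𝓝 0) := by
    refine Tendsto.congr' ?_ hsum
    filter_upwards [eventually_gt_atTop (0:ℝ)] with t ht
    have ht0 : (t:ℂ) ≠ 0 := by
      simpa using (Complex.ofReal_ne_zero.mpr ht.ne')
    rw [Finset.sum_sub_distrib]
    congr 1
    · simp only [hD, hF]
      rw [Finset.sum_div]
      refine Finset.sum_congr rfl fun ξ _ => ?_
      rw [sub_mul, Complex.exp_sub]
      have hpe : (t:ℂ)^d ≠ 0 := pow_ne_zero _ ht0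
      field_simp
    · simp only [hh, hS]
      rw [Finset.sum_filter]
  -- Step B: h is somewhere nonzero
  have hξ₁S : ξ₁ ∈ S := by
    rw [hS]
    exact Finset.mem_filter.mpr ⟨hξ₁Ξ, by simp only [hP]; exact ⟨hq₁, hre₁, hdeg₁⟩⟩
  have hc₁ : c ξ₁ ≠ 0 := by
    simp only [hc]
    rw [← hdeg₁, Polynomial.coeff_natDegree]
    exact Polynomial.leadingCoeff_ne_zero.mpr hq₁
  have hinjS : Set.InjOn (fun ξ : ℂ => ξ.im) S := by
    intro x hx y hy hxy
    have hx' : x ∈ S := hx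
    have hy' : y ∈ S := hy
    rw [hS] at hx' hy'
    have hxP := (Finset.mem_filter.mp hx').2
    have hyP := (Finset.mem_filter.mp hy').2
    rw [hP] at hxP hyP
    exact Complex.ext (hxP.2.1.trans hyP.2.1.symm) hxy
  obtain ⟨t₀, ht₀⟩ := trig_nonzero S c hinjS ξ₁ hξ₁S hc₁
  have ht₀' : h t₀ ≠ 0 := by simpa only [hh] using ht₀
  obtain ⟨a, ha⟩ : ∃ a : ℝ, a = ‖h t₀‖ := ⟨_, rfl⟩
  have ha0 : 0 < a := by rw [ha]; exact norm_pos_iff.mpr ht₀'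
  -- constants
  obtain ⟨K, hK⟩ : ∃ K : ℝ, K = 1 + ∑ ξ ∈ S, (‖c ξ‖ + 1) * (|ξ.im| + 1) := ⟨_, rfl⟩
  have hsum_nonneg : (0:ℝ) ≤ ∑ ξ ∈ S, (‖c ξ‖ + 1) * (|ξ.im| + 1) :=
    Finset.sum_nonneg fun ξ _ => by positivity
  have hK1 : (1:ℝ) ≤ K := by rw [hK]; linarith
  have hKne : K ≠ 0 := by intro hx; rw [hx] at hK1; linarith
  have hK0 : (0:ℝ) < K := lt_of_lt_of_le one_pos hK1
  have hKim : ∀ ξ ∈ S, |ξ.im| ≤ K := by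
    intro ξ hξ
    have h1 : (‖c ξ‖ + 1) * (|ξ.im| + 1) ≤ ∑ ζ ∈ S, (‖c ζ‖ + 1) * (|ζ.im| + 1) :=
      Finset.single_le_sum (f := fun ζ : ℂ => (‖c ζ‖ + 1) * (|ζ.im| + 1))
        (fun ζ _ => by positivity) hξ
    rw [hK]
    nlinarith [norm_nonneg (c ξ), abs_nonneg ξ.im]
  have hKcim : ∑ ξ ∈ S, ‖c ξ‖ * |ξ.im| ≤ K := by
    rw [hK]
    have : ∑ ξ ∈ S, ‖c ξ‖ * |ξ.im| ≤ ∑ ξ ∈ S, (‖c ξ‖ + 1) * (|ξ.im| + 1) :=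
      Finset.sum_le_sum fun ξ _ => by nlinarith [norm_nonneg (c ξ), abs_nonneg ξ.im]
    linarith
  have hKc : ∑ ξ ∈ S, ‖c ξ‖ ≤ K := by
    rw [hK]
    have : ∑ ξ ∈ S, ‖c ξ‖ ≤ ∑ ξ ∈ S, (‖c ξ‖ + 1) * (|ξ.im| + 1) :=
      Finset.sum_le_sum fun ξ _ => by nlinarith [norm_nonneg (c ξ), abs_nonneg ξ.im]
    linarith
  obtain ⟨ε, hε⟩ : ∃ ε : ℝ, ε = min (1/K) (a/(8*K)) := ⟨_, rfl⟩
  have hε0 : 0 < ε := by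
    rw [hε]
    have hK0' : (0:ℝ) < 8*K := by linarith
    exact lt_min (div_pos one_pos hK0) (div_pos ha0 hK0')
  -- local Lipschitz estimate for h
  have hlip : ∀ s t : ℝ, |t - s| ≤ ε → ‖h t - h s‖ ≤ a/4 := by
    intro s t hts
    have h1 : h t - h s = ∑ ξ ∈ S, c ξ * Complex.exp (Complex.I * ξ.im * s)
        * (Complex.exp (Complex.I * ξ.im * (t - s : ℝ)) - 1) := by
      simp only [hh]
      rw [← Finset.sum_sub_distrib]
      refine Finset.sum_congr rfl fun ξ _ => ?_
      have e : Complex.exp (Complex.I * ξ.im * ((t - s : ℝ) : ℂ))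
          * Complex.exp (Complex.I * ξ.im * (s : ℂ)) = Complex.exp (Complex.I * ξ.im * (t : ℂ)) := by
        rw [← Complex.exp_add]
        congr 1
        push_cast
        ring
      linear_combination (-(c ξ)) * e
    rw [h1]
    have h2 : ∀ ξ ∈ S, ‖c ξ * Complex.exp (Complex.I * ξ.im * s)
        * (Complex.exp (Complex.I * ξ.im * (t - s : ℝ)) - 1)‖
        ≤ ‖c ξ‖ * (2 * (|ξ.im| * ε)) := by
      intro ξ hξ
      rw [norm_mul, norm_mul, norm_exp_I_mul, mul_one]
      have habs : ‖Complex.I * ξ.im * ((t - s : ℝ) : ℂ)‖ = |ξ.im| * |t - s| := by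
        rw [norm_mul, norm_mul, Complex.norm_I, one_mul, Complex.norm_real,
          Complex.norm_real, Real.norm_eq_abs, Real.norm_eq_abs]
      have hle1 : ‖Complex.I * ξ.im * ((t - s : ℝ) : ℂ)‖ ≤ 1 := by
        rw [habs]
        calc |ξ.im| * |t - s| ≤ K * (1/K) := by
              refine mul_le_mul (hKim ξ hξ) (hts.trans (by rw [hε]; exact min_le_left _ _))
                (abs_nonneg _) hK0.le
          _ = 1 := by field_simp
      have := Complex.norm_exp_sub_one_le hle1
      rw [habs] at this
      have h3 : ‖Complex.exp (Complex.I * ξ.im * (t - s : ℝ)) - 1‖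
          ≤ 2 * (|ξ.im| * |t - s|) := this
      calc ‖c ξ‖ * ‖Complex.exp (Complex.I * ξ.im * (t - s : ℝ)) - 1‖
          ≤ ‖c ξ‖ * (2 * (|ξ.im| * |t - s|)) := by
            exact mul_le_mul_of_nonneg_left h3 (norm_nonneg _)
        _ ≤ ‖c ξ‖ * (2 * (|ξ.im| * ε)) := by
            refine mul_le_mul_of_nonneg_left ?_ (norm_nonneg _)
            refine mul_le_mul_of_nonneg_left ?_ (by norm_num)
            exact mul_le_mul_of_nonneg_left hts (abs_nonneg _)
    calc ‖∑ ξ ∈ S, c ξ * Complex.exp (Complex.I * ξ.im * s)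
        * (Complex.exp (Complex.I * ξ.im * (t - s : ℝ)) - 1)‖
        ≤ ∑ ξ ∈ S, ‖c ξ * Complex.exp (Complex.I * ξ.im * s)
          * (Complex.exp (Complex.I * ξ.im * (t - s : ℝ)) - 1)‖ := norm_sum_le _ _
      _ ≤ ∑ ξ ∈ S, ‖c ξ‖ * (2 * (|ξ.im| * ε)) := Finset.sum_le_sum h2
      _ = 2 * ε * ∑ ξ ∈ S, ‖c ξ‖ * |ξ.im| := by
          rw [Finset.mul_sum]; exact Finset.sum_congr rfl fun ξ _ => by ring
      _ ≤ 2 * ε * K := by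
          refine mul_le_mul_of_nonneg_left hKcim (by linarith)
      _ ≤ 2 * (a/(8*K)) * K := by
          refine mul_le_mul_of_nonneg_right ?_ hK0.le
          have h4 : ε ≤ a/(8*K) := by rw [hε]; exact min_le_right _ _
          linarith
      _ = a/4 := by field_simp; ring
  -- threshold for the approximation
  have hDh' : ∀ᶠ t : ℝ in atTop, ‖D t - h t‖ < a/4 := by
    have := Metric.tendsto_nhds.mp hDh (a/4) (by linarith)
    simpa [dist_zero_right] using this
  obtain ⟨T, hT⟩ := eventually_atTop.mp hDh'
  -- good return times
  obtain ⟨δ, hδ⟩ : ∃ δ : ℝ, δ = a/(4*K) := ⟨_, rfl⟩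
  have hδ0 : 0 < δ := by rw [hδ]; exact div_pos ha0 (by linarith)
  have hEv : ∀ᶠ n : ℕ in atTop, max T 1 + ε ≤ t₀ + n := by
    have := tendsto_natCast_atTop_atTop (R := ℝ)
    filter_upwards [this.eventually_ge_atTop (max T 1 + ε - t₀)] with n hn
    linarith
  have hFreq := (recurrence S δ hδ0).and_eventually hEv
  obtain ⟨φ, hφ, hgood⟩ := Filter.extraction_of_frequently_atTop hFreq
  refine ⟨a/4, by linarith, ε, hε0, fun n => t₀ + (φ n : ℝ), ?_, ?_, ?_⟩
  · intro m n hmn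
    have h1 := hφ hmn
    have h2 : (φ m : ℝ) < φ n := by exact_mod_cast h1
    show t₀ + (φ m : ℝ) < t₀ + (φ n : ℝ)
    linarith
  · refine tendsto_atTop_add_const_left _ t₀ ?_
    exact tendsto_natCast_atTop_atTop.comp hφ.tendsto_atTop
  · intro n t htn
    change |t - (t₀ + (φ n : ℝ))| < ε at htn
    obtain ⟨hret, hthr⟩ := hgood n
    -- t is large
    have ht_large : max T 1 < t := by
      have : t₀ + (φ n : ℝ) - ε < t := by
        have := abs_lt.mp htn
        linarith [this.1]
      linarith
    have htT : T ≤ t := le_of_lt (lt_of_le_of_lt (le_max_left T 1) ht_large)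
    have ht1 : (1:ℝ) < t := lt_of_le_of_lt (le_max_right T 1) ht_large
    have ht0 : (0:ℝ) < t := lt_trans one_pos ht1
    -- step 1: h at the return point
    have hret' : ‖h (t₀ + (φ n : ℝ)) - h t₀‖ ≤ a/4 := by
      have h1 : h (t₀ + (φ n : ℝ)) - h t₀ = ∑ ξ ∈ S, c ξ
          * Complex.exp (Complex.I * ξ.im * t₀)
          * (Complex.exp (Complex.I * ξ.im * ((φ n : ℕ) : ℝ)) - 1) := by
        simp only [hh]
        rw [← Finset.sum_sub_distrib]
        refine Finset.sum_congr rfl fun ξ _ => ?_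
        have e : Complex.exp (Complex.I * ξ.im * (t₀ : ℂ))
            * Complex.exp (Complex.I * ξ.im * (((φ n : ℕ) : ℝ) : ℂ))
            = Complex.exp (Complex.I * ξ.im * ((t₀ + ((φ n : ℕ) : ℝ) : ℝ) : ℂ)) := by
          rw [← Complex.exp_add]
          congr 1
          push_cast
          ring
        linear_combination (-(c ξ)) * e
      rw [h1]
      calc ‖∑ ξ ∈ S, c ξ * Complex.exp (Complex.I * ξ.im * t₀)
          * (Complex.exp (Complex.I * ξ.im * ((φ n : ℕ) : ℝ)) - 1)‖
          ≤ ∑ ξ ∈ S, ‖c ξ * Complex.exp (Complex.I * ξ.im * t₀)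
            * (Complex.exp (Complex.I * ξ.im * ((φ n : ℕ) : ℝ)) - 1)‖ := norm_sum_le _ _
        _ ≤ ∑ ξ ∈ S, ‖c ξ‖ * δ := by
            refine Finset.sum_le_sum fun ξ hξ => ?_
            rw [norm_mul, norm_mul, norm_exp_I_mul, mul_one]
            exact mul_le_mul_of_nonneg_left (le_of_lt (hret ξ hξ)) (norm_nonneg _)
        _ = δ * ∑ ξ ∈ S, ‖c ξ‖ := by rw [Finset.mul_sum]; exact Finset.sum_congr rfl fun ξ _ => by ring
        _ ≤ δ * K := mul_le_mul_of_nonneg_left hKc hδ0.le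
        _ = a/4 := by rw [hδ]; field_simp
    have hhret : a - a/4 ≤ ‖h (t₀ + (φ n : ℝ))‖ := by
      have := norm_sub_norm_le (h (t₀ + (φ n : ℝ))) (h t₀)
      have h2 : ‖h t₀‖ - ‖h (t₀ + (φ n : ℝ))‖ ≤ a/4 := by
        calc ‖h t₀‖ - ‖h (t₀ + (φ n : ℝ))‖ ≤ ‖h t₀ - h (t₀ + (φ n : ℝ))‖ :=
              norm_sub_norm_le _ _
          _ = ‖h (t₀ + (φ n : ℝ)) - h t₀‖ := by rw [norm_sub_rev]
          _ ≤ a/4 := hret'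
      rw [ha]
      linarith
    -- step 2: h at t
    have hht : a/2 ≤ ‖h t‖ := by
      have h2 : ‖h t - h (t₀ + (φ n : ℝ))‖ ≤ a/4 := hlip _ _ (le_of_lt htn)
      have h3 : ‖h (t₀ + (φ n : ℝ))‖ - ‖h t‖ ≤ a/4 := by
        calc ‖h (t₀ + (φ n : ℝ))‖ - ‖h t‖ ≤ ‖h (t₀ + (φ n : ℝ)) - h t‖ :=
              norm_sub_norm_le _ _
          _ = ‖h t - h (t₀ + (φ n : ℝ))‖ := by rw [norm_sub_rev]
          _ ≤ a/4 := h2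
      linarith
    -- step 3: D at t
    have hDt : a/4 ≤ ‖D t‖ := by
      have h2 : ‖D t - h t‖ < a/4 := hT t htT
      have h3 : ‖h t‖ - ‖D t‖ ≤ ‖h t - D t‖ := norm_sub_norm_le _ _
      rw [norm_sub_rev] at h3
      linarith
    -- step 4: conclude
    have hden : Complex.exp ((lam:ℂ) * t) * (t:ℂ)^d ≠ 0 := by
      refine mul_ne_zero (Complex.exp_ne_zero _) (pow_ne_zero _ ?_)
      exact_mod_cast ht0.ne'
    have hFt : F t = D t * (Complex.exp ((lam:ℂ) * t) * (t:ℂ)^d) := by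
      rw [hD]
      field_simp
      rw [mul_div_cancel_right₀ _ (pow_ne_zero _ (by exact_mod_cast ht0.ne'))]
    have hnormden : ‖Complex.exp ((lam:ℂ) * t) * (t:ℂ)^d‖ = Real.exp (lam*t) * t^d := by
      rw [norm_mul, norm_pow, Complex.norm_exp]
      congr 2
      · simp [Complex.mul_re]
      · rw [Complex.norm_real, Real.norm_eq_abs, _root_.abs_of_pos ht0]
    have hgoal : ‖F t‖ = ‖D t‖ * (Real.exp (lam*t) * t^d) := by
      rw [hFt, norm_mul, hnormden]
    calc a/4 * Real.exp (lam * t) * t^d ≤ ‖D t‖ * (Real.exp (lam*t) * t^d) := by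
          rw [← mul_assoc]
          refine mul_le_mul_of_nonneg_right ?_ (by positivity)
          exact mul_le_mul_of_nonneg_right hDt (by positivity)
      _ = ‖F t‖ := hgoal.symm
      _ = ‖∑ ξ ∈ Ξ, Complex.exp (ξ * t) * (q ξ).eval (t:ℂ)‖ := by simp only [hF]
end
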